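/- Let p, q be points in a metric space and V a finite set of voters such that at least half of the voters are (weakly) closer to p than to q. Then Σ_{v∈V} d(v, p) ≤ 3 · Σ_{v∈V} d(v, q). -/

import Mathlib

/-- metric version of the distortion-3 majority lemma: if at least half the
voters are weakly closer to `p` than to `q`, then `Σ d(v,p) ≤ 3·Σ d(v,q)`. -/
theorem stmt15 {X : Type*} [MetricSpace X] (p q : X) (V : Finset X)
    (hmaj : (V.card : ℝ) ≤ 2 * ((V.filter fun v => dist v p ≤ dist v q).card : ℝ)) :
    ∑ v ∈ V, dist v p ≤ 3 * ∑ v ∈ V, dist v q := by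
  classical
  set S := V.filter fun v => dist v p ≤ dist v q with hS
  have hSsub : S ⊆ V := Finset.filter_subset _ _
  -- card of complement ≤ card S
  have hcard : ((V \ S).card : ℝ) ≤ (S.card : ℝ) := by
    have : ((V \ S).card : ℝ) = (V.card : ℝ) - (S.card : ℝ) := by
      rw [Finset.card_sdiff_of_subset hSsub]
      have := Finset.card_le_card hSsub
      push_cast [Nat.cast_sub this]
      ring
    linarith
  -- key bound: |S| * d(p,q) ≤ 2 Σ_S d(v,q)
  have hkey : (S.card : ℝ) * dist p q ≤ 2 * ∑ v ∈ S, dist v q := by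
    have h1 : ∀ v ∈ S, dist p q ≤ 2 * dist v q := by
      intro v hv
      have hv' := (Finset.mem_filter.mp hv).2
      have := dist_triangle p v q
      rw [dist_comm p v] at this
      linarith
    calc (S.card : ℝ) * dist p q = ∑ _v ∈ S, dist p q := by
          rw [Finset.sum_const, nsmul_eq_mul]
      _ ≤ ∑ v ∈ S, 2 * dist v q := Finset.sum_le_sum h1
      _ = 2 * ∑ v ∈ S, dist v q := by rw [Finset.mul_sum]
  have hsplitp : ∑ v ∈ V, dist v p = ∑ v ∈ S, dist v p + ∑ v ∈ V \ S, dist v p := by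
    rw [add_comm, Finset.sum_sdiff hSsub]
  have hsplitq : ∑ v ∈ V, dist v q = ∑ v ∈ S, dist v q + ∑ v ∈ V \ S, dist v q := by
    rw [add_comm, Finset.sum_sdiff hSsub]
  have h2 : ∑ v ∈ S, dist v p ≤ ∑ v ∈ S, dist v q :=
    Finset.sum_le_sum fun v hv => (Finset.mem_filter.mp hv).2
  have h3 : ∑ v ∈ V \ S, dist v p ≤ ∑ v ∈ V \ S, dist v q + ((V \ S).card : ℝ) * dist p q := by
    have : ∀ v ∈ V \ S, dist v p ≤ dist v q + dist p q := by
      intro v _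
      have := dist_triangle v q p
      rw [dist_comm q p] at this
      linarith
    calc ∑ v ∈ V \ S, dist v p ≤ ∑ v ∈ V \ S, (dist v q + dist p q) :=
          Finset.sum_le_sum this
      _ = ∑ v ∈ V \ S, dist v q + ((V \ S).card : ℝ) * dist p q := by
          rw [Finset.sum_add_distrib, Finset.sum_const, nsmul_eq_mul]
  have hdpq : (0:ℝ) ≤ dist p q := dist_nonneg
  have h4 : ((V \ S).card : ℝ) * dist p q ≤ (S.card : ℝ) * dist p q :=
    mul_le_mul_of_nonneg_right hcard hdpq
  have hnn : (0:ℝ) ≤ ∑ v ∈ V \ S, dist v q :=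
    Finset.sum_nonneg fun v _ => dist_nonneg
  linarith
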